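/- Let $\beta_1, \ldots, \beta_k < 0$, $\alpha_n \to \infty$ with $n e^{\alpha_n\beta_1} \to 0$ and $\alpha_n / n \to 0$. Define $S_n = \sum_{j=0}^{n} \binom{n}{j} e^{n\alpha_n \sum_{p=1}^k \beta_p (j/n)^p}$. Then $\lim_{n\to\infty} \frac{n \log S_n}{n^2 e^{\alpha_n\beta_1}} = 1$. -/

import Mathlib

open Real Filter Finset
open scoped Topology

theorem stmt10 (k : ℕ) (hk : 1 ≤ k) (β : ℕ → ℝ)
    (hβ : ∀ p ∈ Finset.Icc 1 k, β p < 0)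
    (α : ℕ → ℝ) (hα : Tendsto α atTop atTop)
    (h1 : Tendsto (fun n : ℕ => (n : ℝ) * Real.exp (α n * β 1)) atTop (nhds 0))
    (h2 : Tendsto (fun n : ℕ => α n / n) atTop (nhds 0))
    (S : ℕ → ℝ)
    (hS : ∀ n : ℕ, S n = ∑ j ∈ Finset.range (n + 1), (n.choose j : ℝ) *
        Real.exp ((n : ℝ) * α n * ∑ p ∈ Finset.Icc 1 k, β p * ((j : ℝ) / n) ^ p)) :
    Tendsto (fun n : ℕ => ((n : ℝ) * Real.log (S n)) / ((n : ℝ) ^ 2 * Real.exp (α n * β 1)))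
      atTop (nhds 1) := by
  have h1mem : (1 : ℕ) ∈ Finset.Icc 1 k := Finset.mem_Icc.2 ⟨le_refl 1, hk⟩
  set ε : ℕ → ℝ := fun n => (n : ℝ) * α n *
      ∑ p ∈ (Finset.Icc 1 k).erase 1, β p * ((1 : ℝ) / n) ^ p with hεdef
  -- exponent identity at j = 1
  have hexp1 : ∀ n : ℕ, 1 ≤ n →
      (n : ℝ) * α n * ∑ p ∈ Finset.Icc 1 k, β p * ((1 : ℝ) / n) ^ p = α n * β 1 + ε n := by
    intro n hn
    have hne : (n : ℝ) ≠ 0 := Nat.cast_ne_zero.2 (by omega)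
    rw [← Finset.add_sum_erase _ _ h1mem]
    simp only [hεdef]
    field_simp
  -- ε tends to 0
  have hεlim : Tendsto ε atTop (𝓝 0) := by
    apply squeeze_zero_norm' (a := fun n : ℕ => (∑ p ∈ Finset.Icc 1 k, |β p|) * (α n / n))
    · filter_upwards [eventually_ge_atTop 1, hα.eventually_ge_atTop 0] with n hn hαn
      have hn0 : (0 : ℝ) < n := by exact_mod_cast Nat.pos_of_ne_zero (by omega)
      have hne : (n : ℝ) ≠ 0 := ne_of_gt hn0
      have hinv1 : (1 : ℝ) / n ≤ 1 := by
        rw [div_le_one hn0]; exact_mod_cast hn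
      have hinv0 : (0 : ℝ) ≤ 1 / n := by positivity
      have hs : |∑ p ∈ (Finset.Icc 1 k).erase 1, β p * ((1 : ℝ) / n) ^ p|
          ≤ (∑ p ∈ Finset.Icc 1 k, |β p|) * (1 / n) ^ 2 := by
        calc |∑ p ∈ (Finset.Icc 1 k).erase 1, β p * ((1 : ℝ) / n) ^ p|
            ≤ ∑ p ∈ (Finset.Icc 1 k).erase 1, |β p * ((1 : ℝ) / n) ^ p| :=
              Finset.abs_sum_le_sum_abs _ _
          _ ≤ ∑ p ∈ (Finset.Icc 1 k).erase 1, |β p| * (1 / n) ^ 2 := by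
              apply Finset.sum_le_sum
              intro p hp
              have hp2 : 2 ≤ p := by
                have h' := Finset.mem_erase.1 hp
                have h'' := Finset.mem_Icc.1 h'.2
                omega
              rw [abs_mul, abs_pow, abs_of_nonneg hinv0]
              exact mul_le_mul_of_nonneg_left (pow_le_pow_of_le_one hinv0 hinv1 hp2)
                (abs_nonneg _)
          _ ≤ ∑ p ∈ Finset.Icc 1 k, |β p| * (1 / n) ^ 2 := by
              apply Finset.sum_le_sum_of_subset_of_nonneg (Finset.erase_subset _ _)
              intro p _ _
              positivity
          _ = (∑ p ∈ Finset.Icc 1 k, |β p|) * (1 / n) ^ 2 := by rw [Finset.sum_mul]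
      have hna : 0 ≤ (n : ℝ) * α n := by positivity
      calc ‖ε n‖
          = (n : ℝ) * α n * |∑ p ∈ (Finset.Icc 1 k).erase 1, β p * ((1 : ℝ) / n) ^ p| := by
            simp only [hεdef, Real.norm_eq_abs, abs_mul, Nat.abs_cast,
              abs_of_nonneg hαn]
        _ ≤ (n : ℝ) * α n * ((∑ p ∈ Finset.Icc 1 k, |β p|) * (1 / n) ^ 2) :=
            mul_le_mul_of_nonneg_left hs hna
        _ = (∑ p ∈ Finset.Icc 1 k, |β p|) * (α n / n) := by
            field_simp
    · have h := h2.const_mul (∑ p ∈ Finset.Icc 1 k, |β p|)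
      simpa using h
  -- lower bound on S
  have hSlb : ∀ n : ℕ, 1 ≤ n →
      1 + (n : ℝ) * Real.exp (α n * β 1) * Real.exp (ε n) ≤ S n := by
    intro n hn
    rw [hS n]
    have hsub : ({0, 1} : Finset ℕ) ⊆ Finset.range (n + 1) := by
      intro j hj
      simp only [Finset.mem_insert, Finset.mem_singleton] at hj
      simp only [Finset.mem_range]
      omega
    have hterm0 : ((n.choose 0 : ℝ)) *
        Real.exp ((n : ℝ) * α n * ∑ p ∈ Finset.Icc 1 k, β p * (((0 : ℕ) : ℝ) / n) ^ p) = 1 := by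
      have hz : ∑ p ∈ Finset.Icc 1 k, β p * (0 : ℝ) ^ p = 0 := by
        apply Finset.sum_eq_zero
        intro p hp
        have hp1 : 1 ≤ p := (Finset.mem_Icc.1 hp).1
        simp [zero_pow (by omega : p ≠ 0)]
      simp [hz]
    have hterm1 : ((n.choose 1 : ℝ)) *
        Real.exp ((n : ℝ) * α n * ∑ p ∈ Finset.Icc 1 k, β p * (((1 : ℕ) : ℝ) / n) ^ p)
        = (n : ℝ) * (Real.exp (α n * β 1) * Real.exp (ε n)) := by
      rw [Nat.choose_one_right]
      simp only [Nat.cast_one]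
      rw [hexp1 n hn, Real.exp_add]
    calc 1 + (n : ℝ) * Real.exp (α n * β 1) * Real.exp (ε n)
        = ∑ j ∈ ({0, 1} : Finset ℕ), (n.choose j : ℝ) *
            Real.exp ((n : ℝ) * α n * ∑ p ∈ Finset.Icc 1 k, β p * ((j : ℝ) / n) ^ p) := by
          rw [Finset.sum_pair (by norm_num : (0 : ℕ) ≠ 1), hterm0, hterm1]
          ring
      _ ≤ _ := Finset.sum_le_sum_of_subset_of_nonneg hsub (fun j _ _ => by positivity)
  -- upper bound on S
  have hSub : ∀ n : ℕ, 1 ≤ n → 0 ≤ α n → S n ≤ (1 + Real.exp (α n * β 1)) ^ n := by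
    intro n hn hαn
    have hn0 : (0 : ℝ) < n := by exact_mod_cast Nat.pos_of_ne_zero (by omega)
    have hne : (n : ℝ) ≠ 0 := ne_of_gt hn0
    rw [hS n]
    have hterm : ∀ j ∈ Finset.range (n + 1),
        (n.choose j : ℝ) *
          Real.exp ((n : ℝ) * α n * ∑ p ∈ Finset.Icc 1 k, β p * ((j : ℝ) / n) ^ p)
          ≤ (n.choose j : ℝ) * Real.exp (α n * β 1) ^ j := by
      intro j _
      apply mul_le_mul_of_nonneg_left _ (by positivity)
      rw [← Real.exp_nat_mul]
      apply Real.exp_le_exp.2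
      have hjn : (0 : ℝ) ≤ (j : ℝ) / n := by positivity
      have hsum : ∑ p ∈ Finset.Icc 1 k, β p * ((j : ℝ) / n) ^ p ≤ β 1 * ((j : ℝ) / n) := by
        rw [← Finset.add_sum_erase _ _ h1mem]
        have hrest : ∑ p ∈ (Finset.Icc 1 k).erase 1, β p * ((j : ℝ) / n) ^ p ≤ 0 := by
          apply Finset.sum_nonpos
          intro p hp
          have hβp := hβ p (Finset.mem_of_mem_erase hp)
          have hpow := pow_nonneg hjn p
          nlinarith
        rw [pow_one]
        linarith
      have hna : 0 ≤ (n : ℝ) * α n := by positivity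
      calc (n : ℝ) * α n * ∑ p ∈ Finset.Icc 1 k, β p * ((j : ℝ) / n) ^ p
          ≤ (n : ℝ) * α n * (β 1 * ((j : ℝ) / n)) := mul_le_mul_of_nonneg_left hsum hna
        _ = (j : ℝ) * (α n * β 1) := by field_simp
    apply le_trans (Finset.sum_le_sum hterm)
    rw [show (1 : ℝ) + Real.exp (α n * β 1) = Real.exp (α n * β 1) + 1 from add_comm _ _,
      add_pow]
    apply le_of_eq
    apply Finset.sum_congr rfl
    intro j _
    simp [mul_comm]
  -- limits
  have hexpε : Tendsto (fun n => Real.exp (ε n)) atTop (𝓝 1) := by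
    have h := (Real.continuous_exp.tendsto 0).comp hεlim
    simpa [Function.comp_def] using h
  have hx : Tendsto (fun n : ℕ => (n : ℝ) * Real.exp (α n * β 1) * Real.exp (ε n))
      atTop (𝓝 0) := by
    have h := h1.mul hexpε
    simpa using h
  have hL : Tendsto (fun n : ℕ => Real.exp (ε n) /
      (1 + (n : ℝ) * Real.exp (α n * β 1) * Real.exp (ε n))) atTop (𝓝 1) := by
    have hden : Tendsto (fun n : ℕ => 1 + (n : ℝ) * Real.exp (α n * β 1) * Real.exp (ε n))
        atTop (𝓝 1) := by
      have h := (tendsto_const_nhds (x := (1 : ℝ)) (f := (atTop : Filter ℕ))).add hx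
      simpa using h
    have h := hexpε.div hden one_ne_zero
    simpa [Pi.div_def] using h
  apply tendsto_of_tendsto_of_tendsto_of_le_of_le' hL tendsto_const_nhds
  · -- lower bound on the ratio
    filter_upwards [eventually_ge_atTop 1, hα.eventually_ge_atTop 0] with n hn hαn
    have hn0 : (0 : ℝ) < n := by exact_mod_cast Nat.pos_of_ne_zero (by omega)
    have hE0 : 0 < Real.exp (α n * β 1) := Real.exp_pos _
    set E := Real.exp (α n * β 1) with hE
    set x := (n : ℝ) * E * Real.exp (ε n) with hxdef
    have hx0 : 0 < x := by positivity
    have h1x : (0 : ℝ) < 1 + x := by positivity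
    have hSn : 1 + x ≤ S n := hSlb n hn
    have hlog : x / (1 + x) ≤ Real.log (S n) := by
      have hlog1 : Real.log (1 + x) ≤ Real.log (S n) := Real.log_le_log h1x hSn
      have hkey : 1 - (1 + x)⁻¹ ≤ Real.log (1 + x) := Real.one_sub_inv_le_log_of_pos h1x
      have heq : x / (1 + x) = 1 - (1 + x)⁻¹ := by field_simp; ring
      linarith [heq ▸ hkey]
    have hrw : ((n : ℝ) * Real.log (S n)) / ((n : ℝ) ^ 2 * E)
        = Real.log (S n) / ((n : ℝ) * E) := by
      rw [pow_two, mul_assoc, mul_div_mul_left _ _ (ne_of_gt hn0)]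
    have hrw2 : Real.exp (ε n) / (1 + x) = (x / (1 + x)) / ((n : ℝ) * E) := by
      rw [hxdef]
      field_simp
    calc Real.exp (ε n) / (1 + x) = (x / (1 + x)) / ((n : ℝ) * E) := hrw2
      _ ≤ Real.log (S n) / ((n : ℝ) * E) := by gcongr
      _ = ((n : ℝ) * Real.log (S n)) / ((n : ℝ) ^ 2 * E) := hrw.symm
  · -- upper bound on the ratio
    filter_upwards [eventually_ge_atTop 1, hα.eventually_ge_atTop 0] with n hn hαn
    have hn0 : (0 : ℝ) < n := by exact_mod_cast Nat.pos_of_ne_zero (by omega)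
    have hE0 : 0 < Real.exp (α n * β 1) := Real.exp_pos _
    have hS0 : 0 < S n := lt_of_lt_of_le (by positivity) (hSlb n hn)
    rw [div_le_one (by positivity)]
    have hlogS : Real.log (S n) ≤ (n : ℝ) * Real.exp (α n * β 1) := by
      have hA : Real.log (S n) ≤ Real.log ((1 + Real.exp (α n * β 1)) ^ n) :=
        Real.log_le_log hS0 (hSub n hn hαn)
      rw [Real.log_pow] at hA
      have hB : Real.log (1 + Real.exp (α n * β 1)) ≤ Real.exp (α n * β 1) := by
        have h := Real.log_le_sub_one_of_pos
          (show (0 : ℝ) < 1 + Real.exp (α n * β 1) by positivity)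
        linarith
      calc Real.log (S n) ≤ (n : ℝ) * Real.log (1 + Real.exp (α n * β 1)) := hA
        _ ≤ (n : ℝ) * Real.exp (α n * β 1) := mul_le_mul_of_nonneg_left hB hn0.le
    calc (n : ℝ) * Real.log (S n)
        ≤ (n : ℝ) * ((n : ℝ) * Real.exp (α n * β 1)) :=
          mul_le_mul_of_nonneg_left hlogS hn0.le
      _ = (n : ℝ) ^ 2 * Real.exp (α n * β 1) := by ring
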